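/- If there exists a generalized complex structure on V, i.e. a linear map J : 𝕍 → 𝕍 with J² = −Id which is orthogonal with respect to the natural pairing, then the dimension m of V is even. -/

import Mathlib

open Polynomial Matrix

lemma aux_monic_no_root_eval_zero_pos (p : ℝ[X]) (hm : p.Monic)
    (hdeg : 0 < p.natDegree) (hroot : ∀ t : ℝ, p.eval t ≠ 0) : 0 < p.eval 0 := by
  rcases lt_or_gt_of_ne (hroot 0) with h0 | h0
  · exfalso
    have htop : Filter.Tendsto (fun x => p.eval x) Filter.atTop Filter.atTop :=
      p.tendsto_atTop_of_leadingCoeff_nonneg (natDegree_pos_iff_degree_pos.mp hdeg)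
        (by rw [hm.leadingCoeff]; norm_num)
    obtain ⟨t, ht⟩ := ((htop.eventually_gt_atTop 0).and (Filter.eventually_ge_atTop 0)).exists
    have : (0 : ℝ) ∈ Set.Icc (p.eval 0) (p.eval t) := ⟨le_of_lt h0, le_of_lt ht.1⟩
    obtain ⟨c, _, hc⟩ := intermediate_value_Icc ht.2 (p.continuous.continuousOn) this
    exact hroot c hc
  · exact h0

lemma aux_eval_charpoly {ι : Type*} [Fintype ι] [DecidableEq ι] (M : Matrix ι ι ℝ) (t : ℝ) :
    M.charpoly.eval t = (t • (1 : Matrix ι ι ℝ) - M).det := by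
  have h : (Matrix.charmatrix M).map (Polynomial.evalRingHom t) = t • (1 : Matrix ι ι ℝ) - M := by
    ext i j
    by_cases h : i = j
    · subst h; simp [charmatrix_apply_eq, Matrix.one_apply]
    · simp [charmatrix_apply_ne _ _ _ h, Matrix.one_apply, h]
  calc M.charpoly.eval t = (Polynomial.evalRingHom t) (Matrix.charmatrix M).det := rfl
    _ = ((Matrix.charmatrix M).map (Polynomial.evalRingHom t)).det := RingHom.map_det _ _
    _ = _ := by rw [h]

lemma aux_det_pos {ι : Type*} [Fintype ι] [DecidableEq ι] (M : Matrix ι ι ℝ)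
    (heven : Even (Fintype.card ι)) (hpos : 0 < Fintype.card ι)
    (h : ∀ t : ℝ, (t • (1 : Matrix ι ι ℝ) - M).det ≠ 0) : 0 < M.det := by
  have h0 : 0 < M.charpoly.eval 0 := by
    apply aux_monic_no_root_eval_zero_pos _ M.charpoly_monic
    · rwa [Matrix.charpoly_natDegree_eq_dim]
    · intro t
      rw [aux_eval_charpoly]
      exact h t
  have hd := M.det_eq_sign_charpoly_coeff
  rw [heven.neg_one_pow, one_mul, Polynomial.coeff_zero_eq_eval_zero] at hd
  rw [hd]; exact h0




/-- If there exists a generalized complex structure on `V`,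
i.e. a linear map `J : 𝕍 → 𝕍` on `𝕍 = V ⊕ V*` with `J² = −Id` which is
orthogonal with respect to the natural pairing
`⟨X + ξ, Y + η⟩ = ½(η(X) + ξ(Y))`, then the dimension `m` of `V` is even. -/
theorem dim_even_of_generalized_complex_structure
    (V : Type*) [AddCommGroup V] [Module ℝ V] [FiniteDimensional ℝ V]
    (P : (V × Module.Dual ℝ V) → (V × Module.Dual ℝ V) → ℝ)
    (hP : ∀ v w : V × Module.Dual ℝ V, P v w = (w.2 v.1 + v.2 w.1) / 2)
    (J : (V × Module.Dual ℝ V) →ₗ[ℝ] (V × Module.Dual ℝ V))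
    (hJ2 : J ∘ₗ J = -LinearMap.id)
    (horth : ∀ v w, P (J v) (J w) = P v w) :
    Even (Module.finrank ℝ V) := by
  by_contra hodd
  rw [Nat.not_even_iff_odd] at hodd
  set m := Module.finrank ℝ V with hm
  have hmpos : 0 < m := hodd.pos
  -- bases
  let b : Module.Basis (Fin m) ℝ V := Module.finBasis ℝ V
  let B : Module.Basis (Fin m ⊕ Fin m) ℝ (V × Module.Dual ℝ V) := b.prod b.dualBasis
  -- the pairing as a bilinear map
  let Pbil : (V × Module.Dual ℝ V) →ₗ[ℝ] (V × Module.Dual ℝ V) →ₗ[ℝ] ℝ :=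
    LinearMap.mk₂ ℝ (fun v w => (w.2 v.1 + v.2 w.1) / 2)
      (by intro v v' w; simp; ring) (by intro c v w; simp; ring)
      (by intro v w w'; simp; ring) (by intro c v w; simp; ring)
  have hPbil : ∀ v w, P v w = Pbil v w := by intro v w; rw [hP]; rfl
  -- matrices
  let G : Matrix (Fin m ⊕ Fin m) (Fin m ⊕ Fin m) ℝ := LinearMap.toMatrix₂ B B Pbil
  let Jm : Matrix (Fin m ⊕ Fin m) (Fin m ⊕ Fin m) ℝ := LinearMap.toMatrix B B J
  have hcard : Fintype.card (Fin m ⊕ Fin m) = m + m := by simp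
  have heven : Even (Fintype.card (Fin m ⊕ Fin m)) := by rw [hcard]; exact ⟨m, rfl⟩
  have hcpos : 0 < Fintype.card (Fin m ⊕ Fin m) := by omega
  -- J² = −1 at the matrix level
  have hJm : Jm * Jm = -1 := by
    have h : Jm * Jm = LinearMap.toMatrix B B (J ∘ₗ J) := (LinearMap.toMatrix_comp B B B J J).symm
    rw [hJ2] at h
    have h2 : (LinearMap.toMatrix B B) (-LinearMap.id) = -((LinearMap.toMatrix B B) LinearMap.id) :=
      map_neg (LinearMap.toMatrix B B) LinearMap.id
    rw [h2, LinearMap.toMatrix_id] at h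
    exact h
  -- orthogonality at the matrix level
  have hcomp : Pbil.compl₁₂ J J = Pbil := by
    refine LinearMap.ext fun v => LinearMap.ext fun w => ?_
    simpa only [LinearMap.compl₁₂_apply, ← hPbil] using horth v w
  have hGJ : Jmᵀ * G * Jm = G := by
    have h := congrArg (LinearMap.toMatrix₂ B B) hcomp
    rwa [LinearMap.toMatrix₂_compl₁₂ B B] at h
  -- the explicit form of G
  have hG : G = (2⁻¹ : ℝ) • (Matrix.fromBlocks 0 1 1 0) := by
    have happly : ∀ i j, G i j = Pbil (B i) (B j) := fun i j => LinearMap.toMatrix₂_apply _ _ _ _ _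
    have hBinl : ∀ i, B (Sum.inl i) = (b i, 0) := fun i =>
      Prod.ext (b.prod_apply_inl_fst _ _) (b.prod_apply_inl_snd _ _)
    have hBinr : ∀ i, B (Sum.inr i) = (0, b.dualBasis i) := fun i =>
      Prod.ext (b.prod_apply_inr_fst _ _) (b.prod_apply_inr_snd _ _)
    ext i j
    rcases i with i | i <;> rcases j with j | j <;>
      simp [happly, hBinl, hBinr, Pbil, Matrix.one_apply, Module.Basis.dualBasis_apply_self,
        Finsupp.single_apply, eq_comm, div_eq_inv_mul, mul_ite, mul_one, mul_zero]
  have hdetS : (Matrix.fromBlocks 0 1 1 0 : Matrix (Fin m ⊕ Fin m) (Fin m ⊕ Fin m) ℝ).det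
      = (-1 : ℝ) ^ m := by
    have hS : (Matrix.fromBlocks 0 1 1 0 : Matrix (Fin m ⊕ Fin m) (Fin m ⊕ Fin m) ℝ) *
        Matrix.fromBlocks 1 0 1 1 = Matrix.fromBlocks 1 1 1 0 := by
      rw [Matrix.fromBlocks_multiply]; simp
    have hdet := congrArg Matrix.det hS
    rw [Matrix.det_mul, Matrix.det_fromBlocks_zero₁₂, Matrix.det_fromBlocks_one₁₁] at hdet
    simp only [Matrix.det_one, mul_one, one_mul, zero_sub, Matrix.mul_one] at hdet
    rw [hdet, Matrix.det_neg, Matrix.det_one, mul_one, Fintype.card_fin]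
  have hdetG : G.det = (2⁻¹ : ℝ) ^ (m + m) * (-1 : ℝ) ^ m := by
    rw [hG, Matrix.det_smul, hcard, hdetS]
  have hdetGne : G.det ≠ 0 := by
    rw [hdetG]
    exact mul_ne_zero (pow_ne_zero _ (by norm_num)) (pow_ne_zero _ (by norm_num))
  -- det Jm > 0
  have hJroot : ∀ t : ℝ, (t • (1 : Matrix (Fin m ⊕ Fin m) (Fin m ⊕ Fin m) ℝ) - Jm).det ≠ 0 := by
    intro t hzero
    have key : (t • (1 : Matrix (Fin m ⊕ Fin m) (Fin m ⊕ Fin m) ℝ) - Jm) *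
        (t • (1 : Matrix (Fin m ⊕ Fin m) (Fin m ⊕ Fin m) ℝ) + Jm) = (t ^ 2 + 1) • 1 := by
      rw [sub_mul, mul_add, mul_add, smul_mul_assoc, smul_mul_assoc, one_mul, mul_smul_comm,
        mul_one, hJm, smul_smul]
      simp only [one_mul]
      rw [add_smul, pow_two, one_smul]
      abel
    have hdetkey := congrArg Matrix.det key
    rw [Matrix.det_mul, hzero, zero_mul, Matrix.det_smul, Matrix.det_one, mul_one] at hdetkey
    have : (0:ℝ) < (t ^ 2 + 1) ^ Fintype.card (Fin m ⊕ Fin m) := by positivity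
    rw [← hdetkey] at this
    exact lt_irrefl _ this
  have hJmpos : 0 < Jm.det := aux_det_pos Jm heven hcpos hJroot
  -- K = G * Jm is skew-symmetric with nonzero determinant
  set K : Matrix (Fin m ⊕ Fin m) (Fin m ⊕ Fin m) ℝ := G * Jm with hKdef
  have hGsym : Gᵀ = G := by
    rw [hG]; simp [Matrix.transpose_smul, Matrix.fromBlocks_transpose]
  have hJtG : Jmᵀ * G = -K := by
    have h := congrArg (· * Jm) hGJ
    simp only [Matrix.mul_assoc] at h
    rw [hJm] at h
    simp only [Matrix.mul_neg, Matrix.mul_one] at h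
    rw [hKdef, ← h, neg_neg]
  have hK : Kᵀ = -K := by
    rw [hKdef, Matrix.transpose_mul, hGsym, ← hKdef, hJtG]
  have hdetKne : K.det ≠ 0 := by
    rw [hKdef, Matrix.det_mul]
    exact mul_ne_zero hdetGne (ne_of_gt hJmpos)
  have hKroot : ∀ t : ℝ, (t • (1 : Matrix (Fin m ⊕ Fin m) (Fin m ⊕ Fin m) ℝ) - K).det ≠ 0 := by
    intro t hzero
    obtain ⟨v, hv, hveq⟩ := (Matrix.exists_mulVec_eq_zero_iff).mpr hzero
    have hKv : K *ᵥ v = t • v := by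
      have h := hveq
      rw [Matrix.sub_mulVec, sub_eq_zero] at h
      rw [← h, Matrix.smul_mulVec, Matrix.one_mulVec]
    have hs : v ⬝ᵥ (K *ᵥ v) = 0 := by
      have h1 : v ᵥ* K = -(K *ᵥ v) := by
        have h2 := Matrix.vecMul_transpose K v
        rw [hK, Matrix.vecMul_neg] at h2
        rw [← h2, neg_neg]
      have h3 : v ⬝ᵥ (K *ᵥ v) = -(v ⬝ᵥ (K *ᵥ v)) := by
        conv_lhs => rw [Matrix.dotProduct_mulVec, h1, neg_dotProduct,
          dotProduct_comm]
      linarith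
    rcases eq_or_ne t 0 with rfl | ht
    · apply hdetKne
      rw [← Matrix.exists_mulVec_eq_zero_iff]
      refine ⟨v, hv, ?_⟩
      rw [hKv, zero_smul]
    · have : v ⬝ᵥ v = 0 := by
        rw [hKv, dotProduct_smul, smul_eq_mul] at hs
        exact (mul_eq_zero.mp hs).resolve_left ht
      exact hv (dotProduct_self_eq_zero.mp this)
  have hKpos : 0 < K.det := aux_det_pos K heven hcpos hKroot
  have hGpos : 0 < G.det := by
    rw [hKdef, Matrix.det_mul] at hKpos
    rcases mul_pos_iff.mp hKpos with ⟨h1, _⟩ | ⟨_, h2⟩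
    · exact h1
    · exact absurd hJmpos (not_lt.mpr (le_of_lt h2))
  rw [hdetG, hodd.neg_one_pow, mul_neg_one] at hGpos
  have hhalf : (0:ℝ) < (2⁻¹ : ℝ) ^ (m + m) := by positivity
  linarith
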